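/- arXiv:nlin/0307020 — 7 statements merged into one kernel-verified Lean document; each statement's English description precedes it below -/
import Mathlib

section
/- For every n with 1 ≤ n ≤ D+1, φⁿ(c_D) = Xₙ u_{n-1}⁻¹ Xₙ⁻¹, where Xₙ = F⁻¹ u₀ c₁ u₁ c₂ ⋯ u_{n-2} c_{n-1} (with X₁ = F⁻¹). In particular, φⁿ(c_D) is conjugate to u_{n-1}⁻¹ for 1 ≤ n ≤ D+1. -/
abbrev G : Type := FreeGroup (ℤ ⊕ ℤ)

/-- generator cₙ -/
def c (n : ℤ) : G := FreeGroup.of (Sum.inl n)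
/-- generator uₙ -/
def u (n : ℤ) : G := FreeGroup.of (Sum.inr n)

/-- F = c₁ c₂ ⋯ c_D -/
def F (D : ℕ) : G := ((List.range D).map (fun i => c ((i : ℤ) + 1))).prod

/-- the tangle endomorphism for minimum delay time D -/
def φ (D : ℕ) : G →* G := FreeGroup.lift fun x =>
  match x with
  | Sum.inl n => if n = (D : ℤ) then (F D)⁻¹ * (u 0)⁻¹ * F D else c (n + 1)
  | Sum.inr n => u (n + 1)

/-- X_n = F⁻¹ u₀ c₁ u₁ c₂ ⋯ u_{n-2} c_{n-1} -/
def X (D n : ℕ) : G :=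
  (F D)⁻¹ * ((List.range (n - 1)).map (fun i => u i * c ((i : ℤ) + 1))).prod

lemma flatMap_cast (l : List ℕ) : (do let a ← l; pure (a : ℤ) : List ℤ) = l.map (fun a : ℕ => (a : ℤ)) := by
  induction l with
  | nil => rfl
  | cons h t ih => simp_all [List.flatMap_cons]

lemma F_def (D : ℕ) : F D = ((List.range D).map (fun i : ℕ => c ((i : ℤ) + 1))).prod := by
  unfold F
  rw [flatMap_cast, List.map_map]
  rfl

lemma X_def (D n : ℕ) :
    X D n = (F D)⁻¹ * ((List.range (n - 1)).map (fun i : ℕ => u (i : ℤ) * c ((i : ℤ) + 1))).prod := by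
  unfold X
  rw [flatMap_cast, List.map_map]
  rfl

lemma phi_u (D : ℕ) (m : ℤ) : φ D (u m) = u (m + 1) := by
  simp [φ, u, FreeGroup.lift_apply_of]

lemma phi_c (D : ℕ) (m : ℤ) (h : m ≠ (D : ℤ)) : φ D (c m) = c (m + 1) := by
  simp [φ, c, FreeGroup.lift_apply_of, h]

lemma phi_cD (D : ℕ) : φ D (c D) = (F D)⁻¹ * (u 0)⁻¹ * F D := by
  simp [φ, c, FreeGroup.lift_apply_of]

lemma F_eq (d : ℕ) :
    F (d + 1) = c 1 * ((List.range d).map (fun i : ℕ => c ((i : ℤ) + 2))).prod := by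
  rw [F_def, List.range_succ_eq_map]
  simp only [List.map_cons, List.map_map, List.prod_cons, Nat.cast_zero, zero_add]
  congr 2

lemma phi_F (d : ℕ) : φ (d + 1) (F (d + 1)) = (c 1)⁻¹ * (u 0)⁻¹ * F (d + 1) := by
  have h1 : φ (d + 1) (F (d + 1)) =
      ((List.range d).map (fun i : ℕ => c ((i : ℤ) + 2))).prod *
        ((F (d + 1))⁻¹ * (u 0)⁻¹ * F (d + 1)) := by
    conv_lhs => rw [F_def]
    rw [List.range_succ, List.map_append, List.prod_append, map_mul, map_list_prod,
      List.map_map]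
    congr 1
    · congr 1
      apply List.map_congr_left
      intro a ha
      simp only [List.mem_range] at ha
      simp only [Function.comp_apply]
      rw [phi_c]
      · norm_cast
      · intro h
        have : a = d := by exact_mod_cast by push_cast at h; omega
        omega
    · simp only [List.map_cons, List.map_nil, List.prod_cons, List.prod_nil,
        Function.comp_apply, mul_one]
      rw [show ((d : ℤ) + 1) = ((d + 1 : ℕ) : ℤ) from by push_cast; ring, phi_cD]
  rw [h1, F_eq d]
  group

lemma phi_X (d m : ℕ) (hm : m + 1 ≤ d + 1) :
    φ (d + 1) (X (d + 1) (m + 1)) = X (d + 1) (m + 2) := by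
  rw [X_def, X_def]
  simp only [Nat.add_sub_cancel, Nat.succ_sub_one]
  rw [map_mul, map_inv, phi_F, map_list_prod, List.map_map,
    List.range_succ_eq_map, List.map_cons, List.prod_cons, List.map_map]
  have hmap : (List.range m).map ((fun i : ℕ => u (i : ℤ) * c ((i : ℤ) + 1)) ∘ Nat.succ) =
      (List.range m).map ((φ (d + 1)) ∘ fun i : ℕ => u (i : ℤ) * c ((i : ℤ) + 1)) := by
    apply List.map_congr_left
    intro a ha
    simp only [List.mem_range] at ha
    simp only [Function.comp_apply, map_mul, phi_u]
    rw [phi_c]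
    · congr 2
    · intro h
      have : a = d := by exact_mod_cast by push_cast at h; omega
      omega
  rw [hmap]
  simp only [Nat.cast_zero, zero_add]
  group

lemma key (d : ℕ) (n : ℕ) (hn1 : 1 ≤ n) (hn2 : n ≤ d + 2) :
    (⇑(φ (d + 1)))^[n] (c ((d + 1 : ℕ) : ℤ)) =
      X (d + 1) n * (u ((n : ℤ) - 1))⁻¹ * (X (d + 1) n)⁻¹ := by
  induction n with
  | zero => omega
  | succ k ih =>
    rcases Nat.eq_zero_or_pos k with hk | hk
    · subst hk
      have hX : X (d + 1) 1 = (F (d + 1))⁻¹ := by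
        rw [X_def]; simp
      simp only [Function.iterate_one, Nat.zero_add, hX]
      rw [phi_cD]
      norm_num
    · have ihk := ih hk (by omega)
      obtain ⟨m, rfl⟩ : ∃ m, k = m + 1 := ⟨k - 1, by omega⟩
      rw [Function.iterate_succ_apply', ihk, map_mul, map_mul, map_inv, map_inv, phi_u,
        phi_X d m (by omega)]
      push_cast
      ring_nf

theorem stmt_1 (D : ℕ) (hD : 1 ≤ D) (n : ℕ) (hn1 : 1 ≤ n) (hn2 : n ≤ D + 1) :
    (⇑(φ D))^[n] (c D) = X D n * (u ((n : ℤ) - 1))⁻¹ * (X D n)⁻¹ ∧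
      IsConj ((u ((n : ℤ) - 1))⁻¹) ((⇑(φ D))^[n] (c D)) := by
  obtain ⟨d, rfl⟩ : ∃ d, D = d + 1 := ⟨D - 1, by omega⟩
  have k := key d n hn1 (by omega)
  exact ⟨k, isConj_iff.mpr ⟨X (d + 1) n, k.symm⟩⟩
end

section
/- For D = 1, setting γ = u₀ c₁ u₁ and η = u₀⁻¹ c₁ u₂⁻¹ c₁⁻¹ u₀, one has φ³(c₁) = c₁⁻¹ γ c₁⁻¹ η c₁ γ⁻¹ c₁. -/
lemma φc (n : ℤ) : φ 1 (c n) = if n = 1 then (c 1)⁻¹ * (u 0)⁻¹ * c 1 else c (n+1) := by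
  simp [φ, c, F, List.range_succ]

lemma φu (n : ℤ) : φ 1 (u n) = u (n + 1) := by
  simp [φ, u]

theorem stmt_4 :
    let γ : G := u 0 * c 1 * u 1
    let η : G := (u 0)⁻¹ * c 1 * (u 2)⁻¹ * (c 1)⁻¹ * u 0
    (⇑(φ 1))^[3] (c 1) = (c 1)⁻¹ * γ * (c 1)⁻¹ * η * c 1 * γ⁻¹ * c 1 := by
  show (φ 1) ((φ 1) ((φ 1) (c 1))) = _
  simp only [φc, φu, map_mul, map_inv, if_true, reduceIte]
  norm_num [φc, φu]
  group
end

section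
/- For D = 1 and every n ≥ 0, the total number of occurrences of letters from {u_k^{±1} : k ∈ ℤ} in the reduced word of φⁿ(c₁) equals 2ⁿ − 1. -/
namespace Stmt10Aux

abbrev Letter := (ℤ ⊕ ℤ) × Bool
def R (a b : Letter) : Prop := ¬(a.1 = b.1 ∧ a.2 = !b.2)

lemma reduce_eq_self {L : List Letter} (h : List.Chain' R L) :
    FreeGroup.reduce L = L := by
  induction L with
  | nil => rfl
  | cons x L ih =>
    rw [FreeGroup.reduce.cons, ih h.tail]
    cases L with
    | nil => rfl
    | cons y t =>
      have hr : R x y := List.isChain_cons_cons.mp h |>.1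
      simp only [if_neg hr]

def bar (x : Letter) : Letter := (x.1, !x.2)

lemma invRev_eq (L : List Letter) : FreeGroup.invRev L = (L.map bar).reverse := by
  simp [FreeGroup.invRev, bar]

lemma head?_invRev (L : List Letter) :
    (FreeGroup.invRev L).head? = L.getLast?.map bar := by
  rw [invRev_eq, List.head?_reverse, List.getLast?_map]

lemma getLast?_invRev (L : List Letter) :
    (FreeGroup.invRev L).getLast? = L.head?.map bar := by
  rw [invRev_eq, List.getLast?_reverse, List.head?_map]

lemma chain'_invRev {L : List Letter} (h : List.Chain' R L) :
    List.Chain' R (FreeGroup.invRev L) := by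
  unfold List.Chain' at *
  rw [invRev_eq, List.isChain_reverse, List.isChain_map]
  refine h.imp ?_
  intro a b hab
  simp only [flip, R, bar] at *
  rintro ⟨h1, h2⟩
  exact hab ⟨h1.symm, by simpa using h2.symm⟩

def W : ℕ → List Letter
  | 0 => [(Sum.inl 1, true)]
  | n+1 => FreeGroup.invRev (W n) ++ (Sum.inr (n : ℤ), false) :: W n

lemma W_ne_nil (n : ℕ) : W n ≠ [] := by
  cases n <;> simp [W]

lemma W_ends (n : ℕ) :
    (W n).getLast? = some (Sum.inl 1, true) ∧ ∃ b, (W n).head? = some (Sum.inl 1, b) := by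
  induction n with
  | zero => exact ⟨rfl, true, rfl⟩
  | succ n ih =>
    obtain ⟨hl, b, hh⟩ := ih
    constructor
    · rw [W, List.getLast?_append, List.getLast?_cons, hl]
      · simp
    · refine ⟨!true, ?_⟩
      rw [W, List.head?_append_of_ne_nil]
      · rw [head?_invRev, hl]; rfl
      · simp [FreeGroup.invRev, W_ne_nil n]

lemma W_chain (n : ℕ) : List.Chain' R (W n) := by
  induction n with
  | zero => exact List.isChain_singleton _
  | succ n ih =>
    obtain ⟨hl, b, hh⟩ := W_ends n
    rw [W, List.Chain', List.isChain_append]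
    refine ⟨chain'_invRev ih, ?_, ?_⟩
    · rw [List.isChain_cons]
      refine ⟨?_, ih⟩
      intro y hy
      rw [hh] at hy
      simp at hy
      subst hy
      simp [R]
    · intro x hx y hy
      rw [getLast?_invRev, hh] at hx
      simp [bar] at hx
      subst hx
      simp at hy
      subst hy
      simp [R]

lemma W_count (n : ℕ) :
    (W n).countP (fun l => l.1.isRight) = 2 ^ n - 1 := by
  induction n with
  | zero => simp [W]
  | succ n ih =>
    rw [W, List.countP_append, List.countP_cons, invRev_eq, List.countP_reverse,
      List.countP_map]
    have : (W n).countP ((fun l : Letter => l.1.isRight) ∘ bar)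
        = (W n).countP (fun l => l.1.isRight) := by
      apply List.countP_congr
      intro x _
      simp [bar]
    rw [this, ih]
    have h1 : 1 ≤ 2 ^ n := Nat.one_le_two_pow
    simp only [Sum.isRight_inr]
    simp
    omega

lemma φ_iter_u (n : ℕ) (k : ℤ) : (⇑(φ 1))^[n] (u k) = u (k + n) := by
  induction n generalizing k with
  | zero => simp
  | succ n ih =>
    rw [Function.iterate_succ_apply]
    have : φ 1 (u k) = u (k + 1) := by simp [φ, u]
    rw [this, ih]
    congr 1
    push_cast
    ring

lemma mkW (n : ℕ) : FreeGroup.mk (W n) = (⇑(φ 1))^[n] (c 1) := by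
  induction n with
  | zero => rfl
  | succ n ih =>
    have hφc : φ 1 (c 1) = (c 1)⁻¹ * (u 0)⁻¹ * c 1 := by
      simp [φ, c, F, List.range_succ]
    rw [Function.iterate_succ_apply, hφc]
    rw [iterate_map_mul, iterate_map_mul, iterate_map_inv, iterate_map_inv]
    rw [φ_iter_u]
    have hu : u (0 + n) = FreeGroup.mk [(Sum.inr (n:ℤ), true)] := by
      rw [zero_add]; rfl
    rw [← ih, hu, W, FreeGroup.inv_mk, FreeGroup.inv_mk, ← FreeGroup.mul_mk,
      mul_assoc]
    congr 1

end Stmt10Aux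

theorem stmt_10 (n : ℕ) :
    (((⇑(φ 1))^[n] (c 1)).toWord.countP (fun l => l.1.isRight)) = 2 ^ n - 1 := by
  rw [← Stmt10Aux.mkW, FreeGroup.toWord_mk, Stmt10Aux.reduce_eq_self (Stmt10Aux.W_chain n),
    Stmt10Aux.W_count]
end

section
/- For D = 1 and every n ≥ 1, the reduced word of φⁿ(c₁) strictly alternates between letters from {c₁, c₁⁻¹} and letters from {u_k, u_k⁻¹ : k ≥ 0}, beginning and ending with a letter from {c₁, c₁⁻¹}. -/
namespace Stmt12Aux

abbrev Letter := (ℤ ⊕ ℤ) × Bool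

def sub : Letter → List Letter
  | (Sum.inl m, b) =>
      if m = 1 then [(Sum.inl 1, false), (Sum.inr 0, !b), (Sum.inl 1, true)]
      else [(Sum.inl (m + 1), b)]
  | (Sum.inr k, b) => [(Sum.inr (k + 1), b)]

def W : ℕ → List Letter := fun n => (fun l => l.flatMap sub)^[n] [(Sum.inl 1, true)]

lemma F_one : F 1 = c 1 := by simp [F, List.range_succ]

lemma mk_sub (x : Letter) : FreeGroup.mk (sub x) = φ 1 (FreeGroup.mk [x]) := by
  obtain ⟨a, b⟩ := x
  have hof : ∀ y : ℤ ⊕ ℤ, FreeGroup.mk [(y, true)] = FreeGroup.of y := fun _ => rfl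
  have hofinv : ∀ y : ℤ ⊕ ℤ, FreeGroup.mk [(y, false)] = (FreeGroup.of y)⁻¹ := by
    intro y; rw [← hof, FreeGroup.inv_mk]; rfl
  have hcons : ∀ (x : Letter) (l : List Letter),
      FreeGroup.mk (x :: l) = FreeGroup.mk [x] * FreeGroup.mk l := by
    intro x l; rw [FreeGroup.mul_mk]; rfl
  cases a with
  | inl m =>
    by_cases hm : m = 1
    · subst hm
      have h3 : ∀ (x y z : Letter), FreeGroup.mk [x, y, z] =
          FreeGroup.mk [x] * (FreeGroup.mk [y] * FreeGroup.mk [z]) := by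
        intro x y z; rw [FreeGroup.mul_mk, FreeGroup.mul_mk]; rfl
      cases b <;>
        simp [sub, φ, F_one, h3, hof, hofinv, c, u, mul_assoc]
    · cases b <;>
        simp [sub, hm, φ, hof, hofinv, c, u]
  | inr k =>
    cases b <;> simp [sub, φ, hof, hofinv, c, u]

lemma mk_flatMap (l : List Letter) : FreeGroup.mk (l.flatMap sub) = φ 1 (FreeGroup.mk l) := by
  induction l with
  | nil => simp only [List.flatMap_nil, ← FreeGroup.one_eq_mk, map_one]
  | cons x t ih =>
    have : FreeGroup.mk (x :: t) = FreeGroup.mk [x] * FreeGroup.mk t := by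
      rw [FreeGroup.mul_mk]; rfl
    rw [List.flatMap_cons, ← FreeGroup.mul_mk, ih, this, map_mul, mk_sub]

lemma mk_W (n : ℕ) : FreeGroup.mk (W n) = (⇑(φ 1))^[n] (c 1) := by
  induction n with
  | zero => rfl
  | succ m ih =>
    rw [Function.iterate_succ_apply', ← ih, W, Function.iterate_succ_apply', ← W, mk_flatMap]

/-- alternating structure -/
inductive Alt : List Letter → Prop
  | single (b : Bool) : Alt [(Sum.inl 1, b)]
  | cons (b b' : Bool) (k : ℤ) (hk : 0 ≤ k) {l : List Letter} (h : Alt l) :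
      Alt ((Sum.inl 1, b) :: (Sum.inr k, b') :: l)

lemma alt_flatMap {l : List Letter} (h : Alt l) : Alt (l.flatMap sub) := by
  induction h with
  | single b =>
    cases b <;> exact Alt.cons _ _ 0 le_rfl (Alt.single _)
  | cons b b' k hk h ih =>
    have hs : sub (Sum.inl 1, b) = [(Sum.inl 1, false), (Sum.inr 0, !b), (Sum.inl 1, true)] := by
      simp [sub]
    have hs' : sub (Sum.inr k, b') = [(Sum.inr (k + 1), b')] := rfl
    simp only [List.flatMap_cons, hs, hs', List.cons_append, List.nil_append]
    exact Alt.cons _ _ 0 le_rfl (Alt.cons _ _ (k + 1) (by omega) ih)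

lemma alt_W (n : ℕ) : Alt (W n) := by
  induction n with
  | zero => exact Alt.single true
  | succ m ih => rw [W, Function.iterate_succ_apply', ← W]; exact alt_flatMap ih

lemma alt_head {l : List Letter} (h : Alt l) :
    ∀ x ∈ l.head?, x.1 = Sum.inl (1 : ℤ) := by
  cases h <;> simp

lemma reduce_eq_self {l : List Letter} (h : List.Chain' (fun a b => a.1 ≠ b.1) l) :
    FreeGroup.reduce l = l := by
  induction l with
  | nil => rfl
  | cons x t ih =>
    have ht := h.tail
    rw [FreeGroup.reduce.cons, ih ht]
    cases t with
    | nil => rfl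
    | cons y s =>
      have hxy : x.1 ≠ y.1 := List.isChain_cons_cons.mp h |>.1
      simp [hxy]

lemma alt_chain {l : List Letter} (h : Alt l) :
    List.Chain' (fun a b : Letter => a.1 ≠ b.1) l := by
  induction h with
  | single b => exact List.isChain_singleton _
  | cons b b' k hk h ih =>
    refine List.isChain_cons_cons.mpr ⟨by simp, List.isChain_cons.mpr ⟨?_, ih⟩⟩
    intro y hy
    have := alt_head h y hy
    simp [this]

lemma alt_spec {l : List Letter} (h : Alt l) :
    Odd l.length ∧
      ∀ i (hi : i < l.length),
        (Even i → (l.get ⟨i, hi⟩).1 = Sum.inl 1) ∧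
        (¬ Even i → ∃ k : ℤ, 0 ≤ k ∧ (l.get ⟨i, hi⟩).1 = Sum.inr k) := by
  induction h with
  | single b =>
    refine ⟨⟨0, rfl⟩, ?_⟩
    intro i hi
    match i, hi with
    | 0, _ => exact ⟨fun _ => rfl, fun h => absurd Even.zero h⟩
  | cons b b' k hk h ih =>
    obtain ⟨⟨m, hm⟩, hspec⟩ := ih
    refine ⟨⟨m + 1, by simp [hm]; omega⟩, ?_⟩
    intro i hi
    match i, hi with
    | 0, _ => exact ⟨fun _ => rfl, fun h => absurd Even.zero h⟩
    | 1, _ => exact ⟨fun h => absurd h (by simp), fun _ => ⟨k, hk, rfl⟩⟩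
    | (j + 2), hi =>
      obtain ⟨h1, h2⟩ := hspec j (by simp only [List.length_cons] at hi; omega)
      exact ⟨fun he => h1 (by rcases he with ⟨t, ht⟩; exact ⟨t - 1, by omega⟩),
        fun he => h2 fun hej => he (by rcases hej with ⟨t, ht⟩; exact ⟨t + 1, by omega⟩)⟩

end Stmt12Aux

open Stmt12Aux in
theorem stmt_12 (n : ℕ) (hn : 1 ≤ n) :
    let L := ((⇑(φ 1))^[n] (c 1)).toWord
    Odd L.length ∧
      ∀ i (h : i < L.length),
        (Even i → (L.get ⟨i, h⟩).1 = Sum.inl 1) ∧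
        (¬ Even i → ∃ k : ℤ, 0 ≤ k ∧ (L.get ⟨i, h⟩).1 = Sum.inr k) := by
  intro L
  have hL : L = W n := by
    show ((⇑(φ 1))^[n] (c 1)).toWord = W n
    rw [← mk_W, FreeGroup.toWord_mk, reduce_eq_self (alt_chain (alt_W n))]
  rw [hL]
  exact alt_spec (alt_W n)
end

section
/- For every n with 1 ≤ n ≤ D+1, the reduced word of φⁿ(c_D) has length 2D + 4n − 3. -/
namespace Stmt13

open FreeGroup List

abbrev Letter := (ℤ ⊕ ℤ) × Bool

/-- no-cancellation relation -/
def N (a b : Letter) : Prop := ¬ (a.1 = b.1 ∧ a.2 = !b.2)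

lemma N_of_ne {a b : Letter} (h : a.1 ≠ b.1) : N a b := fun hc => h hc.1

lemma N_of_eq {a b : Letter} (h : a.2 = b.2) : N a b := by
  rintro ⟨-, h2⟩; rw [h] at h2; simp at h2

lemma reduce_of_chain : ∀ {w : List Letter}, w.Chain' N → FreeGroup.reduce w = w := by
  intro w hw
  induction w with
  | nil => rfl
  | cons x t ih =>
    rw [reduce.cons, ih hw.tail]
    cases t with
    | nil => rfl
    | cons y s =>
      have hN : N x y := (List.isChain_cons_cons.1 hw).1
      exact if_neg hN

lemma chain'_of_const {b : Bool} : ∀ {l : List Letter}, (∀ x ∈ l, x.2 = b) → l.Chain' N := by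
  intro l h
  induction l with
  | nil => exact List.isChain_nil
  | cons x t ih =>
    cases t with
    | nil => exact List.isChain_singleton _
    | cons y s =>
      refine List.isChain_cons_cons.2 ⟨N_of_eq ?_, ih ?_⟩
      · rw [h x (by simp), h y (by simp)]
      · intro z hz; exact h z (by simp [hz])

/-- the word for F -/
def Fw (D : ℕ) : List Letter :=
  (List.range D).map fun i : ℕ => (Sum.inl ((i : ℤ) + 1), true)

/-- the word for the alternating prefix -/
def Aw (m : ℕ) : List Letter :=
  (List.range m).flatMap fun i : ℕ => [(Sum.inr (i : ℤ), true), (Sum.inl ((i : ℤ) + 1), true)]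

/-- the full reduced word of φ^[m+1] (c D) -/
def W (D m : ℕ) : List Letter :=
  invRev (Fw D) ++ (Aw m ++ ([(Sum.inr (m : ℤ), false)] ++ (invRev (Aw m) ++ Fw D)))

lemma Fw_bools {D : ℕ} : ∀ x ∈ Fw D, x.2 = true := by
  intro x hx; simp only [Fw, List.mem_map] at hx; obtain ⟨i, -, rfl⟩ := hx; rfl

lemma Aw_bools {m : ℕ} : ∀ x ∈ Aw m, x.2 = true := by
  intro x hx
  simp only [Aw, List.mem_flatMap, List.mem_cons, List.mem_singleton] at hx
  obtain ⟨i, -, rfl | rfl | h⟩ := hx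
  · rfl
  · rfl
  · simp at h

lemma invRev_bools {l : List Letter} (h : ∀ x ∈ l, x.2 = true) :
    ∀ x ∈ invRev l, x.2 = false := by
  intro x hx
  simp only [invRev, List.mem_reverse, List.mem_map] at hx
  obtain ⟨a, ha, rfl⟩ := hx
  simp [h a ha]

lemma Aw_succ (m : ℕ) :
    Aw (m + 1) = Aw m ++ [(Sum.inr (m : ℤ), true), (Sum.inl ((m : ℤ) + 1), true)] := by
  simp [Aw, List.range_succ]

lemma Aw_head (m : ℕ) : (Aw (m + 1)).head? = some (Sum.inr (0 : ℤ), true) := by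
  induction m with
  | zero => rfl
  | succ k ih => rw [Aw_succ, List.head?_append, ih]; rfl

lemma Aw_getLast (m : ℕ) : (Aw (m + 1)).getLast? = some (Sum.inl ((m : ℤ) + 1), true) := by
  rw [Aw_succ, List.getLast?_append]; rfl

lemma Fw_head (D : ℕ) (hD : 1 ≤ D) : (Fw D).head? = some (Sum.inl (1 : ℤ), true) := by
  obtain ⟨d, rfl⟩ := Nat.exists_eq_succ_of_ne_zero (by omega : D ≠ 0)
  rw [Fw, List.range_succ_eq_map]
  simp

lemma invRev_getLast {l : List Letter} :
    (invRev l).getLast? = l.head?.map fun p => (p.1, !p.2) := by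
  simp [invRev]

lemma invRev_head {l : List Letter} :
    (invRev l).head? = l.getLast?.map fun p => (p.1, !p.2) := by
  simp [invRev]

lemma Aw_zero : Aw 0 = [] := rfl

lemma chain'_W (D m : ℕ) (hD : 1 ≤ D) : (W D m).Chain' N := by
  have hFw : (Fw D).Chain' N := chain'_of_const Fw_bools
  have hiFw : (invRev (Fw D)).Chain' N := chain'_of_const (invRev_bools Fw_bools)
  have hAw : (Aw m).Chain' N := chain'_of_const Aw_bools
  have hiAw : (invRev (Aw m)).Chain' N := chain'_of_const (invRev_bools Aw_bools)
  have hiFwLast : (invRev (Fw D)).getLast? = some (Sum.inl (1 : ℤ), false) := by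
    rw [invRev_getLast, Fw_head D hD]; rfl
  -- chain for the tail piece [(inr m, false)] ++ (invRev (Aw m) ++ Fw D)
  have htail : ([((Sum.inr (m : ℤ) : ℤ ⊕ ℤ), false)] ++ (invRev (Aw m) ++ Fw D)).Chain' N := by
    refine List.isChain_append.2 ⟨by simp, List.isChain_append.2 ⟨hiAw, hFw, ?_⟩, ?_⟩
    · intro x hx y hy
      cases m with
      | zero => simp [Aw_zero, invRev] at hx
      | succ k =>
        rw [invRev_getLast, Aw_head k] at hx
        rw [Fw_head D hD] at hy
        simp at hx hy
        subst hx; subst hy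
        exact N_of_ne (by simp)
    · intro x hx y hy
      simp at hx; subst hx
      cases m with
      | zero =>
        rw [Aw_zero] at hy
        simp only [invRev_empty, List.nil_append] at hy
        rw [Fw_head D hD] at hy
        simp at hy; subst hy
        exact N_of_ne (by simp)
      | succ k =>
        rw [List.head?_append, invRev_head, Aw_getLast k] at hy
        simp at hy; subst hy
        exact N_of_ne (by simp)
  -- chain for middle: Aw m ++ tail
  have hmid : (Aw m ++ ([((Sum.inr (m : ℤ) : ℤ ⊕ ℤ), false)] ++ (invRev (Aw m) ++ Fw D))).Chain' N := by
    refine List.isChain_append.2 ⟨hAw, htail, ?_⟩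
    intro x hx y hy
    simp only [List.head?_append, List.head?_cons, Option.or_some] at hy
    simp at hy; subst hy
    cases m with
    | zero => simp [Aw_zero] at hx
    | succ k =>
      rw [Aw_getLast k] at hx
      simp at hx; subst hx
      exact N_of_ne (by simp)
  refine List.isChain_append.2 ⟨hiFw, hmid, ?_⟩
  intro x hx y hy
  rw [hiFwLast] at hx; simp at hx; subst hx
  cases m with
  | zero =>
    rw [Aw_zero] at hy
    simp only [List.nil_append, List.head?_append, List.head?_cons, Option.or_some] at hy
    simp at hy; subst hy
    exact N_of_ne (by simp)
  | succ k =>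
    rw [List.head?_append, Aw_head k] at hy
    simp at hy; subst hy
    exact N_of_ne (by simp)

/-- the alternating group element -/
def A (m : ℕ) : G := ((List.range m).map fun i : ℕ => u (i : ℤ) * c ((i : ℤ) + 1)).prod

lemma F_def (D : ℕ) : F D = ((List.range D).map fun i : ℕ => c ((i : ℤ) + 1)).prod := by
  rw [F]
  congr 1
  simp only [bind_pure_comp]
  rw [List.map_eq_map, List.map_map]
  rfl

lemma A_succ (k : ℕ) : A (k + 1) = A k * (u (k : ℤ) * c ((k : ℤ) + 1)) := by
  simp only [A]
  rw [List.range_succ, List.map_append, List.prod_append]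
  simp

lemma mk_map_true : ∀ l : List (ℤ ⊕ ℤ),
    FreeGroup.mk (l.map fun x => (x, true)) = (l.map FreeGroup.of).prod := by
  intro l
  induction l with
  | nil => rfl
  | cons x t ih =>
    have h : ((x, true) : Letter) :: t.map (fun x => (x, true)) =
        [(x, true)] ++ t.map (fun x => (x, true)) := rfl
    rw [List.map_cons, h, ← FreeGroup.mul_mk, ih]
    rfl

lemma mk_Fw (D : ℕ) : FreeGroup.mk (Fw D) = F D := by
  have h : Fw D = ((List.range D).map fun i : ℕ => (Sum.inl ((i : ℤ) + 1) : ℤ ⊕ ℤ)).map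
      fun x => (x, true) := by rw [Fw, List.map_map]; rfl
  rw [h, mk_map_true, List.map_map, F_def]
  rfl

lemma mk_Aw (m : ℕ) : FreeGroup.mk (Aw m) = A m := by
  induction m with
  | zero => rfl
  | succ k ih =>
    rw [Aw_succ, ← FreeGroup.mul_mk, ih, A_succ]
    congr 1

lemma mk_W (D m : ℕ) :
    FreeGroup.mk (W D m) = (F D)⁻¹ * A m * (u (m : ℤ))⁻¹ * (A m)⁻¹ * F D := by
  have hu : FreeGroup.mk [((Sum.inr (m : ℤ) : ℤ ⊕ ℤ), false)] = (u (m : ℤ))⁻¹ := by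
    rw [u, FreeGroup.of, FreeGroup.inv_mk]; rfl
  rw [W, ← FreeGroup.mul_mk, ← FreeGroup.mul_mk, ← FreeGroup.mul_mk, ← FreeGroup.mul_mk,
    ← FreeGroup.inv_mk, ← FreeGroup.inv_mk, mk_Fw, mk_Aw, hu]
  group

lemma φ_u (D : ℕ) (i : ℤ) : φ D (u i) = u (i + 1) :=
  FreeGroup.lift_apply_of

lemma φ_c (D : ℕ) {i : ℤ} (h : i ≠ (D : ℤ)) : φ D (c i) = c (i + 1) := by
  have h1 : φ D (c i) = if i = (D : ℤ) then (F D)⁻¹ * (u 0)⁻¹ * F D else c (i + 1) :=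
    FreeGroup.lift_apply_of
  rw [h1, if_neg h]

lemma φ_cD (D : ℕ) : φ D (c (D : ℤ)) = (F D)⁻¹ * (u 0)⁻¹ * F D := by
  have h1 : φ D (c (D : ℤ)) =
      if (D : ℤ) = (D : ℤ) then (F D)⁻¹ * (u 0)⁻¹ * F D else c ((D : ℤ) + 1) :=
    FreeGroup.lift_apply_of
  rw [h1, if_pos rfl]

lemma F_eq (d : ℕ) :
    F (d + 1) = c 1 * ((List.range d).map fun i : ℕ => c ((i : ℤ) + 2)).prod := by
  rw [F_def, List.range_succ_eq_map, List.map_cons, List.prod_cons, List.map_map]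
  congr 1

lemma φ_F (d : ℕ) : φ (d + 1) (F (d + 1)) = (c 1)⁻¹ * (u 0)⁻¹ * F (d + 1) := by
  conv_lhs => rw [F_def]
  rw [map_list_prod, List.map_map, List.range_succ, List.map_append, List.prod_append]
  have h1 : ((List.range d).map ((φ (d + 1)) ∘ fun i : ℕ => c ((i : ℤ) + 1))).prod =
      ((List.range d).map fun i : ℕ => c ((i : ℤ) + 2)).prod := by
    congr 1
    apply List.map_congr_left
    intro i hi
    have hi' : i < d := List.mem_range.1 hi
    simp only [Function.comp]
    have hne : (i : ℤ) + 1 ≠ ((d + 1 : ℕ) : ℤ) := by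
      have : i + 1 ≠ d + 1 := by omega
      exact_mod_cast this
    rw [φ_c _ hne]
    have : (i : ℤ) + 1 + 1 = (i : ℤ) + 2 := by ring
    rw [this]
  have h2 : ((List.map ((φ (d + 1)) ∘ fun i : ℕ => c ((i : ℤ) + 1)) [d])).prod =
      (F (d + 1))⁻¹ * (u 0)⁻¹ * F (d + 1) := by
    simp only [List.map_cons, List.map_nil, List.prod_cons, List.prod_nil, mul_one,
      Function.comp]
    have h : ((d : ℤ) + 1) = ((d + 1 : ℕ) : ℤ) := by push_cast; ring
    rw [h, φ_cD]
  rw [h1, h2, F_eq d]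
  group

lemma A_succ' (m : ℕ) :
    A (m + 1) = (u 0 * c 1) *
      ((List.range m).map fun i : ℕ => u ((i : ℤ) + 1) * c ((i : ℤ) + 2)).prod := by
  rw [A, List.range_succ_eq_map, List.map_cons, List.prod_cons, List.map_map]
  congr 1

lemma φ_A (D m : ℕ) (hm : m + 1 ≤ D) :
    φ D (A m) = ((List.range m).map fun i : ℕ => u ((i : ℤ) + 1) * c ((i : ℤ) + 2)).prod := by
  rw [A, map_list_prod, List.map_map]
  congr 1
  apply List.map_congr_left
  intro i hi
  have hi' : i < m := List.mem_range.1 hi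
  simp only [Function.comp_apply, _root_.map_mul]
  have hne : (i : ℤ) + 1 ≠ (D : ℤ) := by
    have : i + 1 ≠ D := by omega
    exact_mod_cast this
  rw [φ_u, φ_c _ hne]
  have : (i : ℤ) + 1 + 1 = (i : ℤ) + 2 := by ring
  rw [this]

lemma φ_F' (D : ℕ) (hD : 1 ≤ D) : φ D (F D) = (c 1)⁻¹ * (u 0)⁻¹ * F D := by
  obtain ⟨d, rfl⟩ := Nat.exists_eq_succ_of_ne_zero (by omega : D ≠ 0)
  exact φ_F d

lemma iterate_eq (D : ℕ) (hD : 1 ≤ D) :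
    ∀ m : ℕ, m ≤ D →
      (⇑(φ D))^[m + 1] (c (D : ℤ)) = (F D)⁻¹ * A m * (u (m : ℤ))⁻¹ * (A m)⁻¹ * F D := by
  intro m
  induction m with
  | zero =>
    intro _
    rw [Function.iterate_succ_apply', Function.iterate_zero_apply, φ_cD]
    simp [A]
  | succ k ih =>
    intro hk
    rw [Function.iterate_succ_apply', ih (by omega)]
    simp only [_root_.map_mul, _root_.map_inv]
    rw [φ_F' D hD, φ_u, φ_A D k (by omega), A_succ']
    have h : ((k : ℤ) + 1) = (((k + 1 : ℕ)) : ℤ) := by push_cast; ring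
    rw [h]
    group

lemma Aw_length (m : ℕ) : (Aw m).length = 2 * m := by
  induction m with
  | zero => rfl
  | succ k ih => rw [Aw_succ, List.length_append, ih]; simp; omega

lemma length_W (D m : ℕ) : (W D m).length = 2 * D + 4 * m + 1 := by
  have hF : (Fw D).length = D := by simp [Fw]
  simp [W, FreeGroup.invRev_length, Aw_length, hF]
  omega

end Stmt13

theorem stmt_13 (D : ℕ) (hD : 1 ≤ D) (n : ℕ) (hn1 : 1 ≤ n) (hn2 : n ≤ D + 1) :
    ((⇑(φ D))^[n] (c D)).toWord.length = 2 * D + 4 * n - 3 := by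
  obtain ⟨m, rfl⟩ := Nat.exists_eq_add_of_le hn1
  have hm : m ≤ D := by omega
  have h1 : (⇑(φ D))^[1 + m] (c (D : ℤ)) = FreeGroup.mk (Stmt13.W D m) := by
    rw [Nat.add_comm 1 m, Stmt13.iterate_eq D hD m hm, Stmt13.mk_W]
  rw [h1, FreeGroup.toWord_mk, Stmt13.reduce_of_chain (Stmt13.chain'_W D m hD),
    Stmt13.length_W]
  omega
end

section
/- The reduced word of φ^{D+2}(c_D) has length 10D + 5. -/
section Aux

open FreeGroup List

theorem φ_c {D : ℕ} {n : ℤ} (h : n ≠ (D : ℤ)) : φ D (c n) = c (n+1) := by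
  simp [φ, c, FreeGroup.lift_apply_of, h]

theorem φ_cD (D : ℕ) : φ D (c (D : ℤ)) = (F D)⁻¹ * (u 0)⁻¹ * F D := by
  simp [φ, c, FreeGroup.lift_apply_of]

theorem φ_u (D : ℕ) (n : ℤ) : φ D (u n) = u (n+1) := by
  simp [φ, u, FreeGroup.lift_apply_of]

/-- V j = c₁ c₂ ⋯ c_j -/
def V : ℕ → G
  | 0 => 1
  | j+1 => V j * c ((j:ℤ)+1)

theorem F_eq_V (D : ℕ) : F D = V D := by
  induction D with
  | zero => simp [F, V]
  | succ E ih =>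
    rw [V, ← ih, F, F, List.range_succ]
    simp

theorem φ_V {D j : ℕ} (h : j < D) : φ D (V j) = (c 1)⁻¹ * V (j+1) := by
  induction j with
  | zero => simp [V]
  | succ j ih =>
    rw [V, MonoidHom.map_mul, ih (by omega), φ_c (by push_cast; omega)]
    rw [show V (j+2) = V (j+1) * c ((j:ℤ)+1+1) by rw [V]; push_cast; ring_nf]
    group

theorem φ_F {D : ℕ} (hD : 1 ≤ D) : φ D (F D) = (c 1)⁻¹ * (u 0)⁻¹ * F D := by
  obtain ⟨E, rfl⟩ : ∃ E, D = E + 1 := ⟨D-1, by omega⟩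
  rw [F_eq_V, V, MonoidHom.map_mul, φ_V (by omega),
    show ((E:ℤ)+1) = ((E+1 : ℕ) : ℤ) by push_cast; ring, φ_cD, F_eq_V, V]
  group

end Aux

section Aux2

open FreeGroup List

/-- T j = c_j⁻¹ u_{j-1}⁻¹ ⋯ c₁⁻¹ u₀⁻¹ -/
def T : ℕ → G
  | 0 => 1
  | j+1 => (c ((j:ℤ)+1))⁻¹ * (u (j:ℤ))⁻¹ * T j

theorem φ_T {D j : ℕ} (h : j + 1 ≤ D) : φ D (T j) = T (j+1) * u 0 * c 1 := by
  induction j with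
  | zero => simp [T]
  | succ j ih =>
    rw [T, MonoidHom.map_mul, MonoidHom.map_mul, MonoidHom.map_inv, MonoidHom.map_inv,
      φ_c (by push_cast; omega), φ_u, ih (by omega),
      show T (j+2) = (c ((j:ℤ)+1+1))⁻¹ * (u ((j:ℤ)+1))⁻¹ * T (j+1) by
        rw [T]; push_cast; ring_nf]
    group

theorem iter_F {D : ℕ} (hD : 1 ≤ D) :
    ∀ j, j ≤ D → (⇑(φ D))^[j] (F D) = T j * F D := by
  intro j
  induction j with
  | zero => simp [T]
  | succ j ih =>
    intro h
    rw [Function.iterate_succ_apply', ih (by omega), MonoidHom.map_mul, φ_T h, φ_F hD]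
    group

theorem iter_u (D : ℕ) (n : ℤ) : ∀ k, (⇑(φ D))^[k] (u n) = u (n + k)
  | 0 => by simp
  | k+1 => by
    rw [Function.iterate_succ_apply', iter_u D n k, φ_u]
    push_cast; ring_nf

theorem iter_FD1 {D : ℕ} (hD : 1 ≤ D) :
    (⇑(φ D))^[D+1] (F D) = (F D)⁻¹ * u 0 * F D * (u (D:ℤ))⁻¹ * T D * F D := by
  obtain ⟨E, rfl⟩ : ∃ E, D = E + 1 := ⟨D-1, by omega⟩
  rw [Function.iterate_succ_apply', iter_F hD (E+1) le_rfl, MonoidHom.map_mul, φ_F hD,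
    show T (E+1) = (c ((E:ℤ)+1))⁻¹ * (u (E:ℤ))⁻¹ * T E from rfl,
    MonoidHom.map_mul, MonoidHom.map_mul, MonoidHom.map_inv, MonoidHom.map_inv,
    φ_u, φ_T le_rfl,
    show ((E:ℤ)+1) = ((E+1 : ℕ) : ℤ) by push_cast; ring, φ_cD,
    show T (E+1) = (c (((E+1:ℕ)):ℤ))⁻¹ * (u (E:ℤ))⁻¹ * T E by rw [T]; push_cast; ring_nf]
  group

theorem iter_mul (D k : ℕ) (x y : G) :
    (⇑(φ D))^[k] (x * y) = (⇑(φ D))^[k] x * (⇑(φ D))^[k] y := by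
  induction k generalizing x y with
  | zero => simp
  | succ k ih => rw [Function.iterate_succ_apply, Function.iterate_succ_apply,
      Function.iterate_succ_apply, MonoidHom.map_mul, ih]

theorem iter_inv (D k : ℕ) (x : G) : (⇑(φ D))^[k] x⁻¹ = ((⇑(φ D))^[k] x)⁻¹ := by
  induction k generalizing x with
  | zero => simp
  | succ k ih => rw [Function.iterate_succ_apply, Function.iterate_succ_apply,
      MonoidHom.map_inv, ih]

theorem final_group {D : ℕ} (hD : 1 ≤ D) :
    (⇑(φ D))^[D+2] (c (D:ℤ)) =
      ((F D)⁻¹ * u 0 * F D * (u (D:ℤ))⁻¹ * T D * F D)⁻¹ * (u ((D:ℤ)+1))⁻¹ *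
      ((F D)⁻¹ * u 0 * F D * (u (D:ℤ))⁻¹ * T D * F D) := by
  have h1 : (⇑(φ D))^[D+2] (c (D:ℤ)) = (⇑(φ D))^[D+1] (φ D (c (D:ℤ))) := by
    rw [show D+2 = (D+1)+1 from rfl, Function.iterate_succ_apply]
  rw [h1, φ_cD, iter_mul, iter_mul, iter_inv, iter_inv, iter_u, iter_FD1 hD]
  norm_num

/-- word of V j -/
def wV : ℕ → List ((ℤ ⊕ ℤ) × Bool)
  | 0 => []
  | j+1 => wV j ++ [(Sum.inl ((j:ℤ)+1), true)]

/-- word of T j -/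
def wT : ℕ → List ((ℤ ⊕ ℤ) × Bool)
  | 0 => []
  | j+1 => (Sum.inl ((j:ℤ)+1), false) :: (Sum.inr (j:ℤ), false) :: wT j

/-- word of F_{D+1} = φ^{D+1}(F D) -/
def wB (D : ℕ) : List ((ℤ ⊕ ℤ) × Bool) :=
  FreeGroup.invRev (wV D) ++ [(Sum.inr 0, true)] ++ wV D ++ [(Sum.inr (D:ℤ), false)]
    ++ wT D ++ wV D

/-- word of φ^{D+2}(c_D) -/
def wX (D : ℕ) : List ((ℤ ⊕ ℤ) × Bool) :=
  FreeGroup.invRev (wB D) ++ [(Sum.inr ((D:ℤ)+1), false)] ++ wB D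

theorem of_eq_mk (x : ℤ ⊕ ℤ) : FreeGroup.of x = FreeGroup.mk [(x, true)] := rfl

theorem inv_of_eq_mk (x : ℤ ⊕ ℤ) : (FreeGroup.of x)⁻¹ = FreeGroup.mk [(x, false)] := by
  rw [of_eq_mk, FreeGroup.inv_mk]
  simp [FreeGroup.invRev]

theorem mk_V (j : ℕ) : V j = FreeGroup.mk (wV j) := by
  induction j with
  | zero => rw [V, wV, ← FreeGroup.toWord_one, FreeGroup.mk_toWord]
  | succ j ih => rw [V, wV, ih, c, of_eq_mk, FreeGroup.mul_mk]

theorem mk_T (j : ℕ) : T j = FreeGroup.mk (wT j) := by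
  induction j with
  | zero => rw [T, wT, ← FreeGroup.toWord_one, FreeGroup.mk_toWord]
  | succ j ih => rw [T, wT, ih, c, u, inv_of_eq_mk, inv_of_eq_mk, FreeGroup.mul_mk,
      FreeGroup.mul_mk]; rfl

theorem mk_B {D : ℕ} :
    (F D)⁻¹ * u 0 * F D * (u (D:ℤ))⁻¹ * T D * F D = FreeGroup.mk (wB D) := by
  rw [F_eq_V, mk_V, mk_T, u, u, of_eq_mk, inv_of_eq_mk, FreeGroup.inv_mk,
    FreeGroup.mul_mk, FreeGroup.mul_mk, FreeGroup.mul_mk, FreeGroup.mul_mk, FreeGroup.mul_mk, wB]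

theorem mk_X {D : ℕ} (hD : 1 ≤ D) :
    (⇑(φ D))^[D+2] (c (D:ℤ)) = FreeGroup.mk (wX D) := by
  rw [final_group hD, mk_B, u, inv_of_eq_mk, FreeGroup.inv_mk, FreeGroup.mul_mk,
    FreeGroup.mul_mk, wX]

/-- non-cancellation relation for adjacent letters -/
def R (a b : (ℤ ⊕ ℤ) × Bool) : Prop := ¬(a.1 = b.1 ∧ a.2 = !b.2)

instance : DecidableRel R := fun a b => by unfold R; infer_instance

theorem reduce_eq_self : ∀ {L : List ((ℤ ⊕ ℤ) × Bool)}, L.Chain' R → FreeGroup.reduce L = L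
  | [], _ => rfl
  | x :: L, h => by
    have hL : FreeGroup.reduce L = L := reduce_eq_self h.tail
    rw [FreeGroup.reduce.cons, hL]
    cases L with
    | nil => rfl
    | cons hd tl =>
      have hx : ¬(x.1 = hd.1 ∧ x.2 = !hd.2) := (List.isChain_cons_cons.mp h).1
      simp [hx]

theorem chain'_of_snd_const (b : Bool) :
    ∀ {L : List ((ℤ ⊕ ℤ) × Bool)}, (∀ x ∈ L, x.2 = b) → L.Chain' R
  | [], _ => List.IsChain.nil
  | [x], _ => List.isChain_singleton x
  | x :: y :: L, h => List.isChain_cons_cons.mpr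
    ⟨by simp [R, h x (by simp), h y (by simp)],
     chain'_of_snd_const b (fun z hz => h z (by simp at hz ⊢; tauto))⟩

theorem chain'_invRev {L : List ((ℤ ⊕ ℤ) × Bool)} (h : L.Chain' R) :
    (FreeGroup.invRev L).Chain' R := by
  unfold List.Chain' at h ⊢
  rw [FreeGroup.invRev, List.isChain_reverse, List.isChain_map]
  refine h.imp ?_
  rintro a b hab ⟨h1, h2⟩
  simp only [Function.flip_def] at *
  exact hab ⟨h1.symm, by revert h2; cases a.2 <;> cases b.2 <;> simp⟩

theorem wV_snd {j : ℕ} : ∀ x ∈ wV j, x.2 = true := by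
  induction j with
  | zero => simp [wV]
  | succ j ih =>
    intro x hx
    rw [wV] at hx
    simp at hx
    rcases hx with h | h
    · exact ih x h
    · simp [h]

theorem wT_snd {j : ℕ} : ∀ x ∈ wT j, x.2 = false := by
  induction j with
  | zero => simp [wT]
  | succ j ih =>
    intro x hx
    rw [wT] at hx
    simp at hx
    rcases hx with h | h | h
    · simp [h]
    · simp [h]
    · exact ih x h

theorem chain_wV (j : ℕ) : (wV j).Chain' R := chain'_of_snd_const true wV_snd
theorem chain_wT (j : ℕ) : (wT j).Chain' R := chain'_of_snd_const false wT_snd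

theorem wV_head {j : ℕ} (h : 1 ≤ j) : (wV j).head? = some (Sum.inl 1, true) := by
  induction j with
  | zero => omega
  | succ j ih =>
    rw [wV]
    cases Nat.eq_or_lt_of_le h with
    | inl h0 => cases h0; rfl
    | inr h1 =>
      rw [List.head?_append, ih (by omega)]
      rfl

theorem wV_last (j : ℕ) : (wV (j+1)).getLast? = some (Sum.inl ((j:ℤ)+1), true) := by
  rw [wV, List.getLast?_concat]

theorem wT_last {j : ℕ} (h : 1 ≤ j) : (wT j).getLast? = some (Sum.inr 0, false) := by
  induction j with
  | zero => omega
  | succ j ih =>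
    cases Nat.eq_or_lt_of_le h with
    | inl h0 => cases h0; rfl
    | inr h1 =>
      obtain ⟨k, rfl⟩ : ∃ k, j = k + 1 := ⟨j - 1, by omega⟩
      have hih := ih (by omega)
      rw [wT, List.getLast?_cons_cons] at hih
      rw [wT, List.getLast?_cons_cons, wT, List.getLast?_cons_cons, List.getLast?_cons_cons]
      exact hih

theorem invRev_head (L : List ((ℤ ⊕ ℤ) × Bool)) :
    (FreeGroup.invRev L).head? = L.getLast?.map (fun x => (x.1, !x.2)) := by
  rw [FreeGroup.invRev, List.head?_reverse, List.getLast?_map]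

theorem invRev_last (L : List ((ℤ ⊕ ℤ) × Bool)) :
    (FreeGroup.invRev L).getLast? = L.head?.map (fun x => (x.1, !x.2)) := by
  rw [FreeGroup.invRev, List.getLast?_reverse, List.head?_map]

theorem chain_wB {E : ℕ} : (wB (E+1)).Chain' R := by
  have h1 := chain_wV (E+1)
  have h2 := chain_wT (E+1)
  have h3 := chain'_invRev h1
  have hVh := wV_head (j := E+1) (by omega)
  have hVl := wV_last E
  have hTl := wT_last (j := E+1) (by omega)
  have hTh : (wT (E+1)).head? = some (Sum.inl ((E:ℤ)+1), false) := rfl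
  have hIh : (FreeGroup.invRev (wV (E+1))).head? = some (Sum.inl ((E:ℤ)+1), false) := by
    rw [invRev_head, hVl]; rfl
  have hIl : (FreeGroup.invRev (wV (E+1))).getLast? = some (Sum.inl 1, false) := by
    rw [invRev_last, hVh]; rfl
  simp only [wB, List.Chain', List.isChain_append, List.getLast?_append, List.head?_append, hVh, hVl,
    hTl, hTh, hIh, hIl, List.isChain_singleton, List.head?_cons, List.getLast?_singleton,
    Option.some_or, Option.mem_def, Option.some.injEq]
  refine ⟨⟨⟨⟨⟨h3, ?_⟩, h1, ?_⟩, ?_⟩, h2, ?_⟩, h1, ?_⟩ <;> simp [R]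

theorem wB_head {E : ℕ} : (wB (E+1)).head? = some (Sum.inl ((E:ℤ)+1), false) := by
  have hIh : (FreeGroup.invRev (wV (E+1))).head? = some (Sum.inl ((E:ℤ)+1), false) := by
    rw [invRev_head, wV_last E]; rfl
  simp only [wB, List.head?_append, hIh, Option.some_or]

theorem chain_wX {E : ℕ} : (wX (E+1)).Chain' R := by
  have h1 := chain_wB (E := E)
  have h2 := chain'_invRev h1
  have hBh := wB_head (E := E)
  have hIl : (FreeGroup.invRev (wB (E+1))).getLast? = some (Sum.inl ((E:ℤ)+1), true) := by
    rw [invRev_last, hBh]; rfl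
  simp only [wX, List.Chain', List.isChain_append, List.getLast?_append, List.head?_append, hBh, hIl,
    List.isChain_singleton, List.head?_cons, List.getLast?_singleton,
    Option.some_or, Option.mem_def, Option.some.injEq]
  refine ⟨⟨h2, ?_⟩, h1, ?_⟩ <;> simp [R]

theorem wV_length (j : ℕ) : (wV j).length = j := by
  induction j with
  | zero => rfl
  | succ j ih => rw [wV]; simp [ih]

theorem wT_length (j : ℕ) : (wT j).length = 2 * j := by
  induction j with
  | zero => rfl
  | succ j ih => rw [wT]; simp [ih]; omega

theorem wB_length (D : ℕ) : (wB D).length = 5 * D + 2 := by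
  simp [wB, FreeGroup.invRev_length, wV_length, wT_length]
  omega

theorem wX_length (D : ℕ) : (wX D).length = 10 * D + 5 := by
  simp [wX, FreeGroup.invRev_length, wB_length]
  omega

end Aux2

theorem stmt_14 (D : ℕ) (hD : 1 ≤ D) :
    ((⇑(φ D))^[D + 2] (c D)).toWord.length = 10 * D + 5 := by
  obtain ⟨E, rfl⟩ : ∃ E, D = E + 1 := ⟨D-1, by omega⟩
  rw [mk_X hD, FreeGroup.toWord_mk, reduce_eq_self chain_wX, wX_length]
end

section
/- For D = 1, define s_N to be the number of occurrences of u₀^{±1} in the reduced word of φ^N(c₁). Then s₁ = 1, s₂ = 2, and s_N = s_{N-1} + 2·s_{N-2} for all N ≥ 3 (the symbolic form of the Epistrophe Continuation and Start Rules: each segment at iterate N−1 continues, and each segment at iterate N−Δ with Δ = D+1 = 2 spawns two new segments). -/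
namespace Stmt15Aux

abbrev Ltr := (ℤ ⊕ ℤ) × Bool

/-- abstract symbols: `A b` = c₁⁻¹ u₀^{±1} c₁, `B k b` = u_{k+1}^{±1} -/
inductive Sym where
  | A (b : Bool)
  | B (k : ℕ) (b : Bool)

open Sym

def word : Sym → List Ltr
  | .A b => [(Sum.inl 1, false), (Sum.inr 0, b), (Sum.inl 1, true)]
  | .B k b => [(Sum.inr ((k : ℤ) + 1), b)]

def sub : Sym → List Sym
  | .A b => [.A true, .B 0 b, .A false]
  | .B k b => [.B (k + 1) b]

def LL : ℕ → List Sym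
  | 0 => [.A false]
  | n + 1 => (LL n).flatMap sub

def isA : Sym → Bool
  | .A _ => true
  | .B _ _ => false

lemma F_one : F 1 = c 1 := by
  simp [F, List.range_succ]

lemma phi_c1 : φ 1 (c 1) = (c 1)⁻¹ * (u 0)⁻¹ * c 1 := by
  simp [φ, c, FreeGroup.lift_apply_of, F_one]

lemma phi_u (n : ℤ) : φ 1 (u n) = u (n + 1) := by
  simp [φ, u, FreeGroup.lift_apply_of]

/-- group element of a symbol -/
def elt : Sym → G
  | .A b => (c 1)⁻¹ * (if b then u 0 else (u 0)⁻¹) * c 1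
  | .B k b => if b then u ((k : ℤ) + 1) else (u ((k : ℤ) + 1))⁻¹

lemma mk_word (s : Sym) : FreeGroup.mk (word s) = elt s := by
  cases s with
  | A b =>
      cases b <;>
        simp [word, elt, c, u, FreeGroup.of, FreeGroup.inv_mk, FreeGroup.invRev,
          FreeGroup.mul_mk]
  | B k b =>
      cases b <;>
        simp [word, elt, u, FreeGroup.of, FreeGroup.inv_mk, FreeGroup.invRev]

lemma phi_elt (s : Sym) : φ 1 (elt s) = ((sub s).map elt).prod := by
  cases s with
  | A b =>
      cases b <;>
        simp [elt, sub, phi_c1, phi_u, mul_assoc]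
  | B k b =>
      cases b <;> simp [elt, sub, phi_u]

lemma mk_flatMap (l : List Sym) :
    FreeGroup.mk (l.flatMap word) = (l.map elt).prod := by
  induction l with
  | nil => rfl
  | cons s l ih =>
      rw [List.flatMap_cons, ← FreeGroup.mul_mk, mk_word, List.map_cons,
        List.prod_cons, ih]

lemma phi_prod (l : List Sym) :
    φ 1 ((l.map elt).prod) = ((l.flatMap sub).map elt).prod := by
  induction l with
  | nil => simp
  | cons s l ih =>
      rw [List.map_cons, List.prod_cons, map_mul, phi_elt, ih,
        List.flatMap_cons, List.map_append, List.prod_append]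

lemma iter_eq (N : ℕ) : (⇑(φ 1))^[N + 1] (c 1) = ((LL N).map elt).prod := by
  induction N with
  | zero =>
      simp [LL, elt, phi_c1]
  | succ N ih =>
      rw [Function.iterate_succ_apply', ih, phi_prod]
      rfl

/-- no cancellation between consecutive letters -/
def Ok (a b : Ltr) : Prop := ¬(a.1 = b.1 ∧ a.2 = !b.2)

lemma reduce_eq_self {L : List Ltr} (h : List.Chain' Ok L) :
    FreeGroup.reduce L = L := by
  induction L with
  | nil => rfl
  | cons x L ih =>
      rw [FreeGroup.reduce.cons, ih h.tail]
      cases L with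
      | nil => rfl
      | cons y L =>
          have hxy : Ok x y := List.isChain_cons_cons.mp h |>.1
          simp only [Ok] at hxy
          simp [if_neg hxy]

lemma chain'_word (s : Sym) : List.Chain' Ok (word s) := by
  cases s <;> simp [word, Ok, List.Chain']

lemma head_word (s : Sym) (x : Ltr) (hx : x ∈ (word s).head?) :
    (isA s = true ∧ x.1 = Sum.inl 1) ∨ (isA s = false ∧ ∃ m, x.1 = Sum.inr m) := by
  cases s <;> simp_all [word, isA] <;> subst hx <;> simp

lemma last_word (s : Sym) (x : Ltr) (hx : x ∈ (word s).getLast?) :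
    (isA s = true ∧ x.1 = Sum.inl 1 ∧ x.2 = true) ∨
      (isA s = false ∧ ∃ m, x.1 = Sum.inr m) := by
  cases s <;> simp_all [word, isA] <;> subst hx <;> simp

def Alt (l : List Sym) : Prop := List.Chain' (fun s t => isA s ≠ isA t) l

lemma chain'_flatMap_word {l : List Sym} (h : Alt l) :
    List.Chain' Ok (l.flatMap word) := by
  induction l with
  | nil => simp [List.Chain']
  | cons s l ih =>
      rw [List.flatMap_cons, List.Chain', List.isChain_append]
      refine ⟨chain'_word s, ih h.tail, ?_⟩
      intro x hx y hy
      cases l with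
      | nil => simp at hy
      | cons t l =>
          have hst : isA s ≠ isA t := List.isChain_cons_cons.mp h |>.1
          have hy' : y ∈ (word t).head? := by
            have hne : word t ≠ [] := by cases t <;> simp [word]
            rwa [List.flatMap_cons, List.head?_append_of_ne_nil _ hne] at hy
          rcases last_word s x hx with ⟨hA, hx1, _⟩ | ⟨hB, m, hx1⟩ <;>
            rcases head_word t y hy' with ⟨hA', hy1⟩ | ⟨hB', m', hy1⟩
          · exact absurd (hA.trans hA'.symm) hst
          · rintro ⟨h1, -⟩; rw [hx1, hy1] at h1; simp at h1
          · rintro ⟨h1, -⟩; rw [hx1, hy1] at h1; simp at h1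
          · exact absurd (hB.trans hB'.symm) hst

lemma last_sub (s : Sym) (x : Sym) (hx : x ∈ (sub s).getLast?) : isA x = isA s := by
  cases s <;> simp_all [sub, isA] <;> subst hx <;> rfl

lemma head_sub (s : Sym) (x : Sym) (hx : x ∈ (sub s).head?) : isA x = isA s := by
  cases s <;> simp_all [sub, isA] <;> subst hx <;> rfl

lemma chain'_sub (s : Sym) : Alt (sub s) := by
  cases s <;> simp [Alt, sub, isA, List.Chain']

lemma alt_flatMap {l : List Sym} (h : Alt l) : Alt (l.flatMap sub) := by
  induction l with
  | nil => simp [Alt, List.Chain']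
  | cons s l ih =>
      rw [List.flatMap_cons]
      rw [Alt, List.Chain', List.isChain_append]
      refine ⟨chain'_sub s, ih h.tail, ?_⟩
      intro x hx y hy
      cases l with
      | nil => simp at hy
      | cons t l =>
          have hst : isA s ≠ isA t := List.isChain_cons_cons.mp h |>.1
          have hy' : y ∈ (sub t).head? := by
            have hne : sub t ≠ [] := by cases t <;> simp [sub]
            rwa [List.flatMap_cons, List.head?_append_of_ne_nil _ hne] at hy
          rw [last_sub s x hx, head_sub t y hy']
          exact hst

lemma alt_LL (N : ℕ) : Alt (LL N) := by
  induction N with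
  | zero => simp [Alt, LL, List.Chain']
  | succ N ih => exact alt_flatMap ih

lemma countP_word (s : Sym) :
    (word s).countP (fun l => l.1 = Sum.inr 0) = if isA s then 1 else 0 := by
  cases s with
  | A b => simp [word, isA, List.countP_cons]
  | B k b =>
      have : ((k : ℤ) + 1) ≠ 0 := by positivity
      simp [word, isA, List.countP_cons, this]

lemma countP_sub (s : Sym) :
    (sub s).countP isA = 2 * (if isA s then 1 else 0) := by
  cases s <;> simp [sub, isA, List.countP_cons]

lemma countP_LL (N : ℕ) : (LL N).countP isA = 2 ^ N := by
  induction N with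
  | zero => simp [LL, isA]
  | succ N ih =>
      rw [LL, List.countP_flatMap]
      have : (List.map (List.countP isA ∘ sub) (LL N)).sum
          = 2 * (LL N).countP isA := by
        induction LL N with
        | nil => simp
        | cons s l ihl =>
            simp [List.countP_cons, countP_sub, ihl, mul_add]
            cases s <;> simp [isA] <;> ring
      rw [this, ih, pow_succ]; ring

lemma countP_flatMap_word (l : List Sym) :
    (l.flatMap word).countP (fun x => x.1 = Sum.inr 0) = l.countP isA := by
  induction l with
  | nil => rfl
  | cons s l ih =>
      rw [List.flatMap_cons, List.countP_append, ih, countP_word,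
        List.countP_cons]
      cases s <;> simp [isA] <;> omega

lemma key (N : ℕ) :
    ((⇑(φ 1))^[N + 1] (c 1)).toWord.countP (fun l => l.1 = Sum.inr 0) = 2 ^ N := by
  rw [iter_eq, ← mk_flatMap, FreeGroup.toWord_mk,
    reduce_eq_self (chain'_flatMap_word (alt_LL N)),
    countP_flatMap_word, countP_LL]

end Stmt15Aux

theorem stmt_15 (s : ℕ → ℕ)
    (hs : ∀ N, s N = ((⇑(φ 1))^[N] (c 1)).toWord.countP (fun l => l.1 = Sum.inr 0)) :
    s 1 = 1 ∧ s 2 = 2 ∧ ∀ N, 3 ≤ N → s N = s (N - 1) + 2 * s (N - 2) := by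
  have hval : ∀ N : ℕ, s (N + 1) = 2 ^ N := by
    intro N
    rw [hs (N + 1)]
    exact Stmt15Aux.key N
  refine ⟨by simpa using hval 0, by simpa using hval 1, ?_⟩
  intro N hN
  obtain ⟨K, rfl⟩ : ∃ K, N = K + 3 := ⟨N - 3, by omega⟩
  have h1 : K + 3 = (K + 2) + 1 := by omega
  have h2 : K + 3 - 1 = (K + 1) + 1 := by omega
  have h3 : K + 3 - 2 = K + 1 := by omega
  rw [h1, h2, h3, hval, hval]
  have h4 : K + 1 = K + 1 := rfl
  rw [show K + 1 = K + 0 + 1 from rfl, hval]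
  ring
end
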